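/- Suppose the latent sub-treatment types S(d) and S(d-1) satisfy: (a) no sorting, P(S(d)=s | D ∈ {d,d-1}) = P(S(d)=s | D=d) = P(S=s | D=d) and analogously at d-1, and (b) no incongruent latent types, P(S(d)=s_d, S(d-1)=s_{d-1} | D ∈ {d,d-1}) = 0 for every incongruent pair. Then the weights w(s_d, s_{d-1}) := P(S(d)=s_d, S(d-1)=s_{d-1} | D ∈ {d,d-1}) satisfy the coupling constraints (∑_{s_d} w = P(S=s_{d-1}|D=d-1), ∑_{s_{d-1}} w = P(S=s_d|D=d)) and place zero weight on all incongruent pairs, so that E[Y|D=d] − E[Y|D=d-1] = ∑_{congruent pairs} w(s_d, s_{d-1})·(E[Y|S=s_d] − E[Y|S=s_{d-1}]). -/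

import Mathlib

open Finset

/- Probability of an event, conditional probability `P(A|B)`, and conditional
expectation `E[Y|A]` under a mass function `p` on a finite sample space. -/

open Classical in
noncomputable def Pr {Ω : Type*} [Fintype Ω] (p : Ω → ℝ) (A : Ω → Prop) : ℝ :=
  ∑ ω, if A ω then p ω else 0

noncomputable def cPr {Ω : Type*} [Fintype Ω] (p : Ω → ℝ) (A B : Ω → Prop) : ℝ :=
  Pr p (fun ω => A ω ∧ B ω) / Pr p B

open Classical in
noncomputable def cexp {Ω : Type*} [Fintype Ω] (p : Ω → ℝ) (Y : Ω → ℝ) (A : Ω → Prop) : ℝ :=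
  (∑ ω, if A ω then p ω * Y ω else 0) / Pr p A

open Classical in
noncomputable def Nm {Ω : Type*} [Fintype Ω] (p Y : Ω → ℝ) (A : Ω → Prop) : ℝ :=
  ∑ ω, if A ω then p ω * Y ω else 0

lemma cexp_eq {Ω : Type*} [Fintype Ω] (p Y : Ω → ℝ) (A : Ω → Prop) :
    cexp p Y A = Nm p Y A / Pr p A := rfl

open Classical in
lemma Pr_congr {Ω : Type*} [Fintype Ω] (p : Ω → ℝ) {A B : Ω → Prop}
    (h : ∀ ω, A ω ↔ B ω) : Pr p A = Pr p B := by
  unfold Pr; exact Finset.sum_congr rfl fun ω _ => by simp [h ω]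

open Classical in
lemma Pr_mono {Ω : Type*} [Fintype Ω] {p : Ω → ℝ} (hp0 : ∀ ω, 0 ≤ p ω) {A B : Ω → Prop}
    (h : ∀ ω, A ω → B ω) : Pr p A ≤ Pr p B := by
  unfold Pr
  refine Finset.sum_le_sum fun ω _ => ?_
  by_cases hA : A ω
  · simp [hA, h ω hA]
  · by_cases hB : B ω <;> simp [hA, hB, hp0 ω]

open Classical in
lemma Pr_marg {Ω α : Type*} [Fintype Ω] [DecidableEq α] (p : Ω → ℝ) (f : Ω → α) (A : Ω → Prop) :
    ∑ s ∈ univ.image f, Pr p (fun ω => f ω = s ∧ A ω) = Pr p A := by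
  unfold Pr
  rw [Finset.sum_comm]
  refine Finset.sum_congr rfl fun ω _ => ?_
  by_cases hA : A ω
  · rw [Finset.sum_eq_single (f ω)]
    · simp [hA]
    · intro s _ hs
      simp only [ite_eq_right_iff]
      rintro ⟨h1, -⟩; exact absurd h1.symm hs
    · intro h; exact absurd (Finset.mem_image_of_mem f (Finset.mem_univ ω)) h
  · simp [hA]

open Classical in
lemma Pr_zero_eq {Ω : Type*} [Fintype Ω] {p : Ω → ℝ} (hp0 : ∀ ω, 0 ≤ p ω) {A : Ω → Prop}
    (h : Pr p A = 0) (Z : Ω → ℝ) : Nm p Z A = 0 := by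
  unfold Nm
  have h0 : ∀ ω, A ω → p ω = 0 := by
    intro ω hω
    have := (Finset.sum_eq_zero_iff_of_nonneg
      (fun ω _ => by by_cases hA : A ω <;> simp [hA, hp0 ω])).mp h ω (Finset.mem_univ ω)
    simpa [hω] using this
  refine Finset.sum_eq_zero fun ω _ => ?_
  by_cases hA : A ω <;> simp [hA]
  exact Or.inl (h0 ω hA)

open Classical in
lemma cexp_decomp {Ω α : Type*} [Fintype Ω] [DecidableEq α] (p : Ω → ℝ)
    (hp0 : ∀ ω, 0 ≤ p ω) (Y : Ω → ℝ) (f : Ω → α) (E : Ω → Prop) (F : Finset α)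
    (hmem : ∀ ω, E ω ↔ f ω ∈ F) :
    cexp p Y E = ∑ s ∈ F, cPr p (fun ω => f ω = s) E * cexp p Y (fun ω => f ω = s) := by
  have hterm : ∀ s ∈ F, cPr p (fun ω => f ω = s) E * cexp p Y (fun ω => f ω = s)
      = Nm p Y (fun ω => f ω = s) / Pr p E := by
    intro s hs
    have hsub : Pr p (fun ω => f ω = s ∧ E ω) = Pr p (fun ω => f ω = s) :=
      Pr_congr p fun ω => ⟨fun h => h.1, fun h => ⟨h, (hmem ω).2 (h ▸ hs)⟩⟩
    unfold cPr
    rw [cexp_eq, hsub]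
    by_cases hq : Pr p (fun ω => f ω = s) = 0
    · rw [Pr_zero_eq hp0 hq Y, zero_div, hq]
      simp
    · field_simp
  rw [Finset.sum_congr rfl hterm, ← Finset.sum_div, cexp_eq]
  congr 1
  unfold Nm
  rw [Finset.sum_comm]
  refine Finset.sum_congr rfl fun ω _ => ?_
  by_cases hE : E ω
  · rw [Finset.sum_eq_single (f ω)]
    · simp [hE]
    · intro s _ hs
      simp only [ite_eq_right_iff]
      intro h1; exact absurd h1.symm hs
    · intro h; exact absurd ((hmem ω).mp hE) h
  · rw [if_neg hE]
    refine (Finset.sum_eq_zero fun s hsF => ?_).symm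
    rw [if_neg]
    intro h1; exact hE ((hmem ω).mpr (h1 ▸ hsF))

open Classical in
/-- Under no sorting and no incongruent latent types, the latent joint weights
`w(s_d, s_{d-1}) = P(S(d)=s_d, S(d-1)=s_{d-1} | D ∈ {d,d-1})` satisfy the coupling
constraints and place zero weight on incongruent pairs, so the aggregate marginal
effect is a fully congruent weighted combination:
`E[Y|D=d] − E[Y|D=d-1] = ∑_{congruent} w·(E[Y|S=s_d] − E[Y|S=s_{d-1}])`. -/
theorem no_incongruent_latent_types_decomposition
    {Ω : Type*} [Fintype Ω] (K : ℕ)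
    (p : Ω → ℝ) (hp0 : ∀ ω, 0 ≤ p ω) (hp1 : ∑ ω, p ω = 1)
    (Y : Ω → ℝ)
    (S Sd Sd1 : Ω → Fin K → ℕ) (D : Ω → ℕ) (hD : ∀ ω, D ω = ∑ i, S ω i)
    (d : ℕ) (hd : 1 ≤ d)
    (hPd : 0 < Pr p (fun ω => D ω = d)) (hPd1 : 0 < Pr p (fun ω => D ω = d - 1))
    -- latent sub-treatments aggregate to their level
    (hSd : ∀ ω, ∑ i, Sd ω i = d) (hSd1 : ∀ ω, ∑ i, Sd1 ω i = d - 1)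
    -- consistency: the observed sub-treatment equals the latent one, S = S(D)
    (hconsd : ∀ ω, D ω = d → S ω = Sd ω) (hconsd1 : ∀ ω, D ω = d - 1 → S ω = Sd1 ω)
    -- (a) no sorting of latent types on D
    (hNSd : ∀ s : Fin K → ℕ,
      cPr p (fun ω => Sd ω = s) (fun ω => D ω = d ∨ D ω = d - 1)
        = cPr p (fun ω => Sd ω = s) (fun ω => D ω = d) ∧
      cPr p (fun ω => Sd ω = s) (fun ω => D ω = d)
        = cPr p (fun ω => S ω = s) (fun ω => D ω = d))
    (hNSd1 : ∀ s' : Fin K → ℕ,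
      cPr p (fun ω => Sd1 ω = s') (fun ω => D ω = d ∨ D ω = d - 1)
        = cPr p (fun ω => Sd1 ω = s') (fun ω => D ω = d - 1) ∧
      cPr p (fun ω => Sd1 ω = s') (fun ω => D ω = d - 1)
        = cPr p (fun ω => S ω = s') (fun ω => D ω = d - 1))
    -- (b) no incongruent latent types
    (hNI : ∀ s s' : Fin K → ℕ, (∑ i, s i = d) → (∑ i, s' i = d - 1) →
      (∀ j : Fin K, s ≠ s' + Pi.single j 1) →
      cPr p (fun ω => Sd ω = s ∧ Sd1 ω = s') (fun ω => D ω = d ∨ D ω = d - 1) = 0) :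
    -- the latent joint distribution is a valid coupling …
    (∀ s' : Fin K → ℕ, (∑ i, s' i = d - 1) →
      ∑ s ∈ (univ.image Sd).filter (fun s => ∑ i, s i = d),
          cPr p (fun ω => Sd ω = s ∧ Sd1 ω = s') (fun ω => D ω = d ∨ D ω = d - 1)
        = cPr p (fun ω => S ω = s') (fun ω => D ω = d - 1)) ∧
    (∀ s : Fin K → ℕ, (∑ i, s i = d) →
      ∑ s' ∈ (univ.image Sd1).filter (fun s' => ∑ i, s' i = d - 1),
          cPr p (fun ω => Sd ω = s ∧ Sd1 ω = s') (fun ω => D ω = d ∨ D ω = d - 1)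
        = cPr p (fun ω => S ω = s) (fun ω => D ω = d)) ∧
    -- … that rationalizes the aggregate marginal effect with congruent pairs only
    (cexp p Y (fun ω => D ω = d) - cexp p Y (fun ω => D ω = d - 1)
      = ∑ s ∈ (univ.image Sd).filter (fun s => ∑ i, s i = d),
          ∑ s' ∈ (univ.image Sd1).filter (fun s' => ∑ i, s' i = d - 1),
            if ∃ j : Fin K, s = s' + Pi.single j 1 then
              cPr p (fun ω => Sd ω = s ∧ Sd1 ω = s') (fun ω => D ω = d ∨ D ω = d - 1) *
                (cexp p Y (fun ω => S ω = s) - cexp p Y (fun ω => S ω = s'))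
            else 0) := by
  classical
  set B : Ω → Prop := fun ω => D ω = d ∨ D ω = d - 1 with hB
  set Fd := (univ.image Sd).filter (fun s => ∑ i, s i = d) with hFdDef
  set Fd1 := (univ.image Sd1).filter (fun s' => ∑ i, s' i = d - 1) with hFd1Def
  have hFdeq : Fd = univ.image Sd := by
    rw [hFdDef]
    refine Finset.filter_true_of_mem fun s hs => ?_
    obtain ⟨ω, -, rfl⟩ := Finset.mem_image.mp hs
    exact hSd ω
  have hFd1eq : Fd1 = univ.image Sd1 := by
    rw [hFd1Def]
    refine Finset.filter_true_of_mem fun s hs => ?_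
    obtain ⟨ω, -, rfl⟩ := Finset.mem_image.mp hs
    exact hSd1 ω
  -- coupling constraint 1 (column sums)
  have hw1 : ∀ s' : Fin K → ℕ, (∑ i, s' i = d - 1) →
      ∑ s ∈ Fd, cPr p (fun ω => Sd ω = s ∧ Sd1 ω = s') B
        = cPr p (fun ω => S ω = s') (fun ω => D ω = d - 1) := by
    intro s' _
    rw [← (hNSd1 s').2, ← (hNSd1 s').1, hFdeq]
    unfold cPr
    rw [← Finset.sum_div]
    congr 1
    rw [← Pr_marg p Sd (fun ω => Sd1 ω = s' ∧ B ω)]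
    exact Finset.sum_congr rfl fun s _ => Pr_congr p fun ω => by tauto
  -- coupling constraint 2 (row sums)
  have hw2 : ∀ s : Fin K → ℕ, (∑ i, s i = d) →
      ∑ s' ∈ Fd1, cPr p (fun ω => Sd ω = s ∧ Sd1 ω = s') B
        = cPr p (fun ω => S ω = s) (fun ω => D ω = d) := by
    intro s _
    rw [← (hNSd s).2, ← (hNSd s).1, hFd1eq]
    unfold cPr
    rw [← Finset.sum_div]
    congr 1
    rw [← Pr_marg p Sd1 (fun ω => Sd ω = s ∧ B ω)]
    exact Finset.sum_congr rfl fun s' _ => Pr_congr p fun ω => by tauto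
  refine ⟨hw1, hw2, ?_⟩
  -- decomposition of the two conditional expectations
  have hEd : ∀ ω, D ω = d ↔ S ω ∈ Fd := by
    intro ω
    constructor
    · intro h
      rw [hFdDef, Finset.mem_filter]
      exact ⟨hconsd ω h ▸ Finset.mem_image_of_mem Sd (Finset.mem_univ ω),
        by rw [← hD ω]; exact h⟩
    · intro h
      rw [hD ω]
      exact (Finset.mem_filter.mp h).2
  have hEd1 : ∀ ω, D ω = d - 1 ↔ S ω ∈ Fd1 := by
    intro ω
    constructor
    · intro h
      rw [hFd1Def, Finset.mem_filter]
      exact ⟨hconsd1 ω h ▸ Finset.mem_image_of_mem Sd1 (Finset.mem_univ ω),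
        by rw [← hD ω]; exact h⟩
    · intro h
      rw [hD ω]
      exact (Finset.mem_filter.mp h).2
  rw [cexp_decomp p hp0 Y S (fun ω => D ω = d) Fd hEd,
      cexp_decomp p hp0 Y S (fun ω => D ω = d - 1) Fd1 hEd1]
  -- rewrite the observed conditional probabilities as marginal weights
  have h1 : ∑ s ∈ Fd, cPr p (fun ω => S ω = s) (fun ω => D ω = d) * cexp p Y (fun ω => S ω = s)
      = ∑ s ∈ Fd, ∑ s' ∈ Fd1,
          cPr p (fun ω => Sd ω = s ∧ Sd1 ω = s') B * cexp p Y (fun ω => S ω = s) := by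
    refine Finset.sum_congr rfl fun s hs => ?_
    rw [← hw2 s (Finset.mem_filter.mp hs).2, Finset.sum_mul]
  have h2 : ∑ s' ∈ Fd1, cPr p (fun ω => S ω = s') (fun ω => D ω = d - 1) * cexp p Y (fun ω => S ω = s')
      = ∑ s ∈ Fd, ∑ s' ∈ Fd1,
          cPr p (fun ω => Sd ω = s ∧ Sd1 ω = s') B * cexp p Y (fun ω => S ω = s') := by
    rw [Finset.sum_comm]
    refine Finset.sum_congr rfl fun s' hs' => ?_
    rw [← hw1 s' (Finset.mem_filter.mp hs').2, Finset.sum_mul]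
  rw [h1, h2, ← Finset.sum_sub_distrib]
  refine Finset.sum_congr rfl fun s hs => ?_
  rw [← Finset.sum_sub_distrib]
  refine Finset.sum_congr rfl fun s' hs' => ?_
  rw [← mul_sub]
  by_cases hc : ∃ j : Fin K, s = s' + Pi.single j 1
  · rw [if_pos hc]
  · rw [if_neg hc, hNI s s' (Finset.mem_filter.mp hs).2 (Finset.mem_filter.mp hs').2
      (by push_neg at hc; exact hc), zero_mul]
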